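/- Let N be a natural number and p, λ, β real numbers with 1 < p < N, λ > 0, β > 0. Let φ, g : ℝ → ℝ with φ continuously differentiable on [1,∞), φ(r) > 0 for all r ≥ 1, g continuous on [1,∞) with g(r) > 0 for all r ≥ 1, F satisfying the radial eigenvalue ODE on (1,∞), the Robin condition φ'(1) = β^(1/(p−1))·φ(1), and r_* > 1 with φ'(r_*) = 0. Then for every real m > 0 such that g(s) ≥ m for all s ∈ [1, r_*], one has r_*^N ≤ 1 + N·β/(λ·m). -/

import Mathlib

open Real Set

/-- The radial quantity `F(r) = r^(N-1) |φ'(r)|^(p-2) φ'(r)`, written with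
real exponents via the sign function. -/
noncomputable def radialF (N : ℕ) (p : ℝ) (φ : ℝ → ℝ) (r : ℝ) : ℝ :=
  r ^ ((N : ℝ) - 1) * Real.sign (deriv φ r) * |deriv φ r| ^ (p - 1)

lemma signAbsRpow_continuous {q : ℝ} (hq : 0 < q) :
    Continuous (fun x : ℝ => Real.sign x * |x| ^ q) := by
  rw [continuous_iff_continuousAt]
  intro x
  rcases lt_trichotomy x 0 with hx | hx | hx
  · have h1 : ContinuousAt (fun y : ℝ => -1 * |y| ^ q) x :=
      continuousAt_const.mul (continuous_abs.continuousAt.rpow_const (Or.inr hq.le))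
    refine h1.congr ?_
    filter_upwards [isOpen_Iio.eventually_mem hx] with y hy
    rw [Real.sign_of_neg hy]
  · subst hx
    have hb : Filter.Tendsto (fun y : ℝ => |y| ^ q) (nhds 0) (nhds 0) := by
      have : ContinuousAt (fun y : ℝ => |y| ^ q) 0 :=
        continuous_abs.continuousAt.rpow_const (Or.inr hq.le)
      simpa [Real.zero_rpow hq.ne'] using this.tendsto
    have h0 : Real.sign (0 : ℝ) * |(0 : ℝ)| ^ q = 0 := by simp [Real.sign_zero]
    rw [ContinuousAt, h0]
    refine squeeze_zero_norm (fun y => ?_) hb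
    rw [Real.norm_eq_abs, abs_mul]
    have hs : |Real.sign y| ≤ 1 := by
      rcases Real.sign_apply_eq y with h | h | h <;> rw [h] <;> norm_num
    have habs : 0 ≤ |y| ^ q := Real.rpow_nonneg (abs_nonneg y) q
    calc |Real.sign y| * |(|y| ^ q)| = |Real.sign y| * |y| ^ q := by rw [abs_of_nonneg habs]
      _ ≤ 1 * |y| ^ q := by gcongr
      _ = |y| ^ q := one_mul _
  · have h1 : ContinuousAt (fun y : ℝ => 1 * |y| ^ q) x :=
      continuousAt_const.mul (continuous_abs.continuousAt.rpow_const (Or.inr hq.le))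
    refine h1.congr ?_
    filter_upwards [isOpen_Ioi.eventually_mem hx] with y hy
    rw [Real.sign_of_pos hy]

/-- Upper bound on the critical radius `r_*` in Theorem 1.4(b):
`r_*^N ≤ 1 + Nβ/(λ m)` whenever `g ≥ m > 0` on `[1, r_*]`. -/
theorem critical_radius_upper (N : ℕ) (p lam β : ℝ)
    (hp : 1 < p) (hpN : p < N) (hlam : 0 < lam) (hβ : 0 < β)
    (φ g : ℝ → ℝ)
    (hφdiff : ∀ r ≥ (1 : ℝ), DifferentiableAt ℝ φ r)
    (hφC1 : ContinuousOn (deriv φ) (Set.Ici 1))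
    (hφpos : ∀ r ≥ (1 : ℝ), 0 < φ r)
    (hgcont : ContinuousOn g (Set.Ici 1))
    (hgpos : ∀ r ≥ (1 : ℝ), 0 < g r)
    (hODE : ∀ r > (1 : ℝ),
      HasDerivAt (radialF N p φ) (-(lam * r ^ ((N : ℝ) - 1) * g r * φ r ^ (p - 1))) r)
    (hRobin : deriv φ 1 = β ^ (1 / (p - 1)) * φ 1)
    (rstar : ℝ) (hrstar : 1 < rstar) (hcrit : deriv φ rstar = 0) :
    ∀ m > (0 : ℝ), (∀ s ∈ Set.Icc (1 : ℝ) rstar, m ≤ g s) →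
      rstar ^ (N : ℝ) ≤ 1 + (N : ℝ) * β / (lam * m) := by
  intro m hm hgm
  have hq0 : (0 : ℝ) < p - 1 := by linarith
  have hrs : (1 : ℝ) ≤ rstar := hrstar.le
  have hN1 : (1 : ℝ) < (N : ℝ) := hp.trans hpN
  have hIcc : Icc (1 : ℝ) rstar ⊆ Ici 1 := Icc_subset_Ici_self
  -- continuity of φ on Icc
  have hφcont : ContinuousOn φ (Icc 1 rstar) := fun r hr =>
    (hφdiff r hr.1).continuousAt.continuousWithinAt
  -- continuity of the power function
  have h1 : ContinuousOn (fun r : ℝ => r ^ ((N : ℝ) - 1)) (Icc 1 rstar) := fun r _ =>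
    (Real.continuousAt_rpow_const r _ (Or.inr (by linarith))).continuousWithinAt
  -- continuity of F on Icc
  have hFc : ContinuousOn (radialF N p φ) (Icc 1 rstar) := by
    have h2 : ContinuousOn (fun r => Real.sign (deriv φ r) * |deriv φ r| ^ (p - 1))
        (Icc 1 rstar) :=
      (signAbsRpow_continuous hq0).comp_continuousOn (hφC1.mono hIcc)
    have : radialF N p φ = fun r => r ^ ((N : ℝ) - 1) *
        (Real.sign (deriv φ r) * |deriv φ r| ^ (p - 1)) := by
      funext r; simp [radialF, mul_assoc]
    rw [this]
    exact h1.mul h2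
  -- continuity of the RHS of the ODE
  have hf'c : ContinuousOn
      (fun r => lam * r ^ ((N : ℝ) - 1) * g r * φ r ^ (p - 1)) (Icc 1 rstar) := by
    refine (((continuousOn_const.mul h1).mul (hgcont.mono hIcc)).mul
      (hφcont.rpow_const fun r hr => Or.inr hq0.le))
  have hint : IntervalIntegrable
      (fun r => -(lam * r ^ ((N : ℝ) - 1) * g r * φ r ^ (p - 1))) MeasureTheory.volume 1 rstar :=
    (hf'c.neg).intervalIntegrable_of_Icc hrs
  -- FTC
  have key : ∫ r in (1 : ℝ)..rstar, -(lam * r ^ ((N : ℝ) - 1) * g r * φ r ^ (p - 1)) =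
      radialF N p φ rstar - radialF N p φ 1 :=
    intervalIntegral.integral_eq_sub_of_hasDeriv_right_of_le hrs hFc
      (fun x hx => (hODE x hx.1).hasDerivWithinAt) hint
  -- value of F at rstar
  have hFr : radialF N p φ rstar = 0 := by simp [radialF, hcrit, Real.sign_zero]
  -- value of F at 1
  have hd1pos : 0 < deriv φ 1 := by
    rw [hRobin]
    exact mul_pos (Real.rpow_pos_of_pos hβ _) (hφpos 1 le_rfl)
  have hF1 : radialF N p φ 1 = β * φ 1 ^ (p - 1) := by
    have hpow : (β ^ (1 / (p - 1))) ^ (p - 1) = β := by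
      rw [← Real.rpow_mul hβ.le, one_div, inv_mul_cancel₀ hq0.ne', Real.rpow_one]
    rw [radialF, Real.one_rpow, Real.sign_of_pos hd1pos, abs_of_pos hd1pos, hRobin,
      Real.mul_rpow (Real.rpow_nonneg hβ.le _) (hφpos 1 le_rfl).le, hpow]
    ring
  -- main integral identity
  have hmain : ∫ r in (1 : ℝ)..rstar, lam * r ^ ((N : ℝ) - 1) * g r * φ r ^ (p - 1) =
      β * φ 1 ^ (p - 1) := by
    have := key
    rw [hFr, hF1, intervalIntegral.integral_neg] at this
    linarith
  -- F is antitone on [1, rstar]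
  have hFanti : AntitoneOn (radialF N p φ) (Icc 1 rstar) := by
    refine antitoneOn_of_deriv_nonpos (convex_Icc _ _) hFc ?_ ?_
    · intro x hx
      rw [interior_Icc] at hx
      exact (hODE x hx.1).differentiableAt.differentiableWithinAt
    · intro x hx
      rw [interior_Icc] at hx
      have hx1 : 1 < x := hx.1
      rw [(hODE x hx1).deriv]
      have : 0 < lam * x ^ ((N : ℝ) - 1) * g x * φ x ^ (p - 1) := by
        have hx0 : (0 : ℝ) < x := by linarith
        exact mul_pos (mul_pos (mul_pos hlam (Real.rpow_pos_of_pos hx0 _))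
          (hgpos x hx1.le)) (Real.rpow_pos_of_pos (hφpos x hx1.le) _)
      linarith
  -- hence φ' ≥ 0 on [1, rstar]
  have hderiv_nonneg : ∀ r ∈ Icc (1 : ℝ) rstar, 0 ≤ deriv φ r := by
    intro r hr
    have hFge : 0 ≤ radialF N p φ r := by
      have := hFanti hr (right_mem_Icc.2 hrs) hr.2
      rw [hFr] at this
      exact this
    by_contra h
    push_neg at h
    have hrpos : (0 : ℝ) < r := lt_of_lt_of_le one_pos hr.1
    have : radialF N p φ r < 0 := by
      rw [radialF, Real.sign_of_neg h]
      have h1p : 0 < r ^ ((N : ℝ) - 1) := Real.rpow_pos_of_pos hrpos _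
      have h2p : 0 < |deriv φ r| ^ (p - 1) :=
        Real.rpow_pos_of_pos (abs_pos.2 h.ne) _
      nlinarith
    linarith
  -- φ is monotone on [1, rstar]
  have hφmono : MonotoneOn φ (Icc 1 rstar) := by
    refine monotoneOn_of_deriv_nonneg (convex_Icc _ _) hφcont ?_ ?_
    · intro x hx
      rw [interior_Icc] at hx
      exact (hφdiff x (by linarith [hx.1])).differentiableWithinAt
    · intro x hx
      rw [interior_Icc] at hx
      exact hderiv_nonneg x ⟨hx.1.le, hx.2.le⟩
  have hφ1 : 0 < φ 1 := hφpos 1 le_rfl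
  -- pointwise lower bound on the integrand
  have hptwise : ∀ r ∈ Icc (1 : ℝ) rstar,
      lam * m * φ 1 ^ (p - 1) * r ^ ((N : ℝ) - 1) ≤
        lam * r ^ ((N : ℝ) - 1) * g r * φ r ^ (p - 1) := by
    intro r hr
    have hrpos : (0 : ℝ) < r := lt_of_lt_of_le one_pos hr.1
    have hφle : φ 1 ^ (p - 1) ≤ φ r ^ (p - 1) :=
      Real.rpow_le_rpow hφ1.le (hφmono (left_mem_Icc.2 hrs) hr hr.1) hq0.le
    have hgr : m ≤ g r := hgm r hr
    have hre : 0 < r ^ ((N : ℝ) - 1) := Real.rpow_pos_of_pos hrpos _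
    have : lam * r ^ ((N : ℝ) - 1) * m * φ 1 ^ (p - 1) ≤
        lam * r ^ ((N : ℝ) - 1) * g r * φ r ^ (p - 1) :=
      mul_le_mul (mul_le_mul_of_nonneg_left hgr (mul_nonneg hlam.le hre.le))
        hφle (Real.rpow_nonneg hφ1.le _)
        (mul_nonneg (mul_nonneg hlam.le hre.le) (hgpos r (hIcc hr)).le)
    linarith [this, (by ring :
      lam * m * φ 1 ^ (p - 1) * r ^ ((N : ℝ) - 1) =
        lam * r ^ ((N : ℝ) - 1) * m * φ 1 ^ (p - 1))]
  -- integrate the lower bound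
  have hintlhs : IntervalIntegrable
      (fun r => lam * m * φ 1 ^ (p - 1) * r ^ ((N : ℝ) - 1)) MeasureTheory.volume 1 rstar :=
    (continuousOn_const.mul h1).intervalIntegrable_of_Icc hrs
  have hintrhs : IntervalIntegrable
      (fun r => lam * r ^ ((N : ℝ) - 1) * g r * φ r ^ (p - 1)) MeasureTheory.volume 1 rstar :=
    hf'c.intervalIntegrable_of_Icc hrs
  have hcomp := intervalIntegral.integral_mono_on hrs hintlhs hintrhs hptwise
  -- compute the left integral
  have hrpowint : ∫ r in (1 : ℝ)..rstar, r ^ ((N : ℝ) - 1) =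
      (rstar ^ (N : ℝ) - 1) / N := by
    rw [integral_rpow (Or.inl (by linarith : (-1 : ℝ) < (N : ℝ) - 1))]
    norm_num
  have hlhs : ∫ r in (1 : ℝ)..rstar, lam * m * φ 1 ^ (p - 1) * r ^ ((N : ℝ) - 1) =
      lam * m * φ 1 ^ (p - 1) * ((rstar ^ (N : ℝ) - 1) / N) := by
    rw [intervalIntegral.integral_const_mul, hrpowint]
  rw [hlhs, hmain] at hcomp
  -- finish with algebra
  have hP : 0 < φ 1 ^ (p - 1) := Real.rpow_pos_of_pos hφ1 _
  have hNpos : (0 : ℝ) < (N : ℝ) := by linarith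
  have h2 : lam * m * ((rstar ^ (N : ℝ) - 1) / N) ≤ β := by
    have := (mul_le_mul_iff_of_pos_right hP).mp (by nlinarith [hcomp] :
      lam * m * ((rstar ^ (N : ℝ) - 1) / N) * φ 1 ^ (p - 1) ≤ β * φ 1 ^ (p - 1))
    exact this
  have h3 : lam * m * (rstar ^ (N : ℝ) - 1) ≤ (N : ℝ) * β := by
    have := mul_le_mul_of_nonneg_right h2 hNpos.le
    calc lam * m * (rstar ^ (N : ℝ) - 1)
        = lam * m * ((rstar ^ (N : ℝ) - 1) / N) * N := by field_simp
      _ ≤ β * N := this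
      _ = (N : ℝ) * β := mul_comm _ _
  have hlm : 0 < lam * m := mul_pos hlam hm
  have h4 : rstar ^ (N : ℝ) - 1 ≤ (N : ℝ) * β / (lam * m) := by
    rw [le_div_iff₀ hlm]
    linarith [h3]
  linarith
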